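/- Let n ≥ 3 and let u, v be integers. There is a unique group endomorphism ρ of the Artin group C(B_n) satisfying ρ(s_1) = s_1 z^u and ρ(s_i) = s_i z^v for all 2 ≤ i ≤ n, and this endomorphism is injective for every choice of u and v. -/

import Mathlib

/-- The defining relations of the Artin group of type `B_n`, on generators `s_1, …, s_n`
(indexed by `Fin n`, so `s_{i+1}` corresponds to the index `i`):
`s_1 s_2 s_1 s_2 = s_2 s_1 s_2 s_1`, the braid relation `s_i s_{i+1} s_i = s_{i+1} s_i s_{i+1}`
for `2 ≤ i ≤ n-1`, and the commutation `s_i s_j = s_j s_i` for `|i - j| ≥ 2`. -/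
def typeBRels (n : ℕ) : Set (FreeGroup (Fin n)) :=
  {r | (∃ i j : Fin n, (i : ℕ) = 0 ∧ (j : ℕ) = 1 ∧
          r = (.of i * .of j) ^ 2 * ((.of j * .of i) ^ 2)⁻¹) ∨
       (∃ i j : Fin n, 1 ≤ (i : ℕ) ∧ (i : ℕ) + 1 = (j : ℕ) ∧
          r = .of i * .of j * .of i * (.of j * .of i * .of j)⁻¹) ∨
       (∃ i j : Fin n, (i : ℕ) + 2 ≤ (j : ℕ) ∧
          r = .of i * .of j * (.of j * .of i)⁻¹)}

/-- The Artin group of type `B_n`. -/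
abbrev ArtinB (n : ℕ) : Type := PresentedGroup (typeBRels n)

/-- The standard generator `s_{i+1}` of the Artin group of type `B_n`. -/
def artinBGen {n : ℕ} (i : Fin n) : ArtinB n := PresentedGroup.of i

/-- The element `z = (s_1 s_2 ⋯ s_n)^n`, which generates the center of the Artin group of
type `B_n`. -/
def artinBTwist (n : ℕ) : ArtinB n :=
  ((List.ofFn fun i : Fin n => artinBGen i).prod) ^ n

namespace ArtinBAux

variable {n : ℕ}

/-- ℕ-indexed generators, with junk value 1 out of range. -/
def S (n : ℕ) (k : ℕ) : ArtinB n := if h : k < n then artinBGen ⟨k, h⟩ else 1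

lemma S_eq {k : ℕ} (h : k < n) : S n k = artinBGen ⟨k, h⟩ := dif_pos h

lemma S_eq' {k : ℕ} (h : ¬ k < n) : S n k = 1 := dif_neg h

lemma rel_eq_one {r : FreeGroup (Fin n)} (hr : r ∈ typeBRels n) :
    PresentedGroup.mk (typeBRels n) r = 1 :=
  (QuotientGroup.eq_one_iff r).mpr (Subgroup.subset_normalClosure hr)

lemma mk_of (i : Fin n) : PresentedGroup.mk (typeBRels n) (FreeGroup.of i) = artinBGen i := rfl

lemma rel1 (h2 : 2 ≤ n) :
    S n 0 * S n 1 * S n 0 * S n 1 = S n 1 * S n 0 * S n 1 * S n 0 := by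
  have h0 : (0:ℕ) < n := by omega
  have h1 : (1:ℕ) < n := by omega
  have hr : ((FreeGroup.of ⟨0,h0⟩ * FreeGroup.of ⟨1,h1⟩) ^ 2 *
      ((FreeGroup.of ⟨1,h1⟩ * FreeGroup.of ⟨0,h0⟩) ^ 2)⁻¹ : FreeGroup (Fin n)) ∈ typeBRels n :=
    Or.inl ⟨⟨0,h0⟩, ⟨1,h1⟩, rfl, rfl, rfl⟩
  rw [S_eq h0, S_eq h1]
  have key : (artinBGen ⟨0,h0⟩ * artinBGen ⟨1,h1⟩) ^ 2 = (artinBGen ⟨1,h1⟩ * artinBGen ⟨0,h0⟩) ^ 2 := by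
    have := rel_eq_one hr
    rw [map_mul, map_inv, map_pow, map_pow, map_mul, map_mul, mk_of, mk_of] at this
    exact mul_inv_eq_one.mp this
  calc artinBGen ⟨0,h0⟩ * artinBGen ⟨1,h1⟩ * artinBGen ⟨0,h0⟩ * artinBGen ⟨1,h1⟩
      = (artinBGen ⟨0,h0⟩ * artinBGen ⟨1,h1⟩) ^ 2 := by rw [sq, mul_assoc]
    _ = (artinBGen ⟨1,h1⟩ * artinBGen ⟨0,h0⟩) ^ 2 := key
    _ = artinBGen ⟨1,h1⟩ * artinBGen ⟨0,h0⟩ * artinBGen ⟨1,h1⟩ * artinBGen ⟨0,h0⟩ := by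
        rw [sq]; simp [mul_assoc]

lemma rel2 {i : ℕ} (h1 : 1 ≤ i) (h2 : i + 1 < n) :
    S n i * S n (i+1) * S n i = S n (i+1) * S n i * S n (i+1) := by
  have hi : i < n := by omega
  have hr : (FreeGroup.of ⟨i,hi⟩ * FreeGroup.of ⟨i+1,h2⟩ * FreeGroup.of ⟨i,hi⟩ *
      (FreeGroup.of ⟨i+1,h2⟩ * FreeGroup.of ⟨i,hi⟩ * FreeGroup.of ⟨i+1,h2⟩)⁻¹ : FreeGroup (Fin n))
      ∈ typeBRels n := Or.inr (Or.inl ⟨⟨i,hi⟩, ⟨i+1,h2⟩, h1, rfl, rfl⟩)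
  have := rel_eq_one hr
  rw [map_mul, map_inv, map_mul, map_mul, map_mul, map_mul, mk_of, mk_of] at this
  rw [S_eq hi, S_eq h2]
  exact mul_inv_eq_one.mp this

lemma rel3 {i j : ℕ} (h : i + 2 ≤ j) : Commute (S n i) (S n j) := by
  by_cases hj : j < n
  · have hi : i < n := by omega
    have hr : (FreeGroup.of ⟨i,hi⟩ * FreeGroup.of ⟨j,hj⟩ *
        (FreeGroup.of ⟨j,hj⟩ * FreeGroup.of ⟨i,hi⟩)⁻¹ : FreeGroup (Fin n)) ∈ typeBRels n :=
      Or.inr (Or.inr ⟨⟨i,hi⟩, ⟨j,hj⟩, h, rfl⟩)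
    have := rel_eq_one hr
    rw [map_mul, map_inv, map_mul, map_mul, mk_of, mk_of] at this
    rw [S_eq hi, S_eq hj]
    exact mul_inv_eq_one.mp this
  · rw [S_eq' hj]; exact Commute.one_right _

/-- product `S a * S (a+1) * ... * S (a+b-1)`. -/
def G (n a b : ℕ) : ArtinB n := ((List.range' a b).map (S n)).prod

lemma G_zero (a : ℕ) : G n a 0 = 1 := rfl

lemma G_succ (a b : ℕ) : G n a (b+1) = G n a b * S n (a+b) := by
  rw [G, List.range'_1_concat, List.map_append, List.prod_append]; simp [G]

lemma G_cons (a b : ℕ) : G n a (b+1) = S n a * G n (a+1) b := by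
  rw [G, List.range'_succ, List.map_cons, List.prod_cons]; rfl

lemma G_one (a : ℕ) : G n a 1 = S n a := by simp [G_succ, G_zero]

lemma G_append (a b c : ℕ) : G n a (b+c) = G n a b * G n (a+b) c := by
  rw [G, G, G, ← List.range'_append_1, List.map_append, List.prod_append]

lemma commute_SG {i a b : ℕ} (h : i + 2 ≤ a ∨ a + b + 1 ≤ i) :
    Commute (S n i) (G n a b) := by
  apply Commute.list_prod_right
  intro x hx
  simp only [List.mem_map, List.mem_range'_1] at hx
  obtain ⟨k, ⟨hk1, hk2⟩, rfl⟩ := hx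
  rcases h with h | h
  · exact rel3 (by omega)
  · exact (rel3 (by omega)).symm

/-- `δ = s_0 s_1 ⋯ s_{n-1}`. -/
abbrev D (n : ℕ) : ArtinB n := G n 0 n

/-- Lemma A: `δ s_i = s_{i+1} δ` for `1 ≤ i ≤ n-2`. -/
lemma shift {i : ℕ} (h1 : 1 ≤ i) (h2 : i + 2 ≤ n) :
    D n * S n i = S n (i+1) * D n := by
  obtain ⟨m, rfl⟩ : ∃ m, n = (i + 2) + m := ⟨n - (i+2), by omega⟩
  have e1 : D ((i+2)+m) = G _ 0 i * S _ i * S _ (i+1) * G _ (i+2) m := by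
    rw [D, G_append 0 (i+2) m, G_succ 0 (i+1), G_succ 0 i]
    simp [mul_assoc]
  rw [e1]
  have c1 : Commute (S ((i+2)+m) i) (G ((i+2)+m) (i+2) m) := commute_SG (Or.inl le_rfl)
  have c2 : Commute (S ((i+2)+m) (i+1)) (G ((i+2)+m) 0 i) :=
    commute_SG (Or.inr (by omega))
  calc G _ 0 i * S _ i * S _ (i+1) * G _ (i+2) m * S _ i
      = G _ 0 i * (S _ i * S _ (i+1) * S _ i) * G _ (i+2) m := by
        simp only [mul_assoc]; rw [← c1.eq]
    _ = G _ 0 i * (S _ (i+1) * S _ i * S _ (i+1)) * G _ (i+2) m := by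
        rw [rel2 h1 (by omega)]
    _ = S _ (i+1) * (G _ 0 i * S _ i * S _ (i+1) * G _ (i+2) m) := by
        simp only [mul_assoc]; rw [← mul_assoc, ← c2.eq, mul_assoc]

/-- Lemma B: `s_1 δ s_0 = s_0 s_1 δ`. -/
lemma lemB (h2 : 2 ≤ n) : S n 1 * (D n * S n 0) = S n 0 * S n 1 * D n := by
  obtain ⟨m, rfl⟩ : ∃ m, n = 2 + m := ⟨n - 2, by omega⟩
  have e1 : D (2+m) = S _ 0 * S _ 1 * G _ 2 m := by
    rw [D, G_append 0 2 m, G_succ 0 1, G_one]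
  have c0 : Commute (S (2+m) 0) (G (2+m) 2 m) := commute_SG (Or.inl le_rfl)
  rw [e1]
  calc S _ 1 * (S _ 0 * S _ 1 * G _ 2 m * S _ 0)
      = S _ 1 * S _ 0 * S _ 1 * S _ 0 * G _ 2 m := by
        simp only [mul_assoc]; rw [← c0.eq]
    _ = S _ 0 * S _ 1 * S _ 0 * S _ 1 * G _ 2 m := by rw [← rel1 (by omega)]
    _ = S _ 0 * S _ 1 * (S _ 0 * S _ 1 * G _ 2 m) := by simp only [mul_assoc]

/-- The conjugating word `a_k = (s_2⋯s_k)⁻¹ (s_0 s_1 s_0⁻¹) (s_2⋯s_k)` satisfies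
`(s_0 ⋯ s_{k-1}) s_k = a_k (s_0 ⋯ s_{k-1})`. -/
lemma ind_a : ∀ k, 1 ≤ k → k + 1 ≤ n →
    G n 0 k * S n k =
      (G n 2 (k-1))⁻¹ * (S n 0 * S n 1 * (S n 0)⁻¹) * G n 2 (k-1) * G n 0 k := by
  intro k h1 h2
  induction k, h1 using Nat.le_induction with
  | base =>
      simp only [show (1:ℕ)-1 = 0 from rfl, G_zero, G_one, inv_one, one_mul, mul_one]
      group
  | succ k hk IH =>
      have IH := IH (by omega)
      have e0 : G n 0 (k+1) = G n 0 k * S n k := by rw [G_succ]; simp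
      have e2 : G n 2 ((k+1)-1) = G n 2 (k-1) * S n (k+1) := by
        have h3 : (k+1)-1 = (k-1)+1 := by omega
        have h4 : 2+(k-1) = k+1 := by omega
        rw [h3, G_succ, h4]
      have cc : S n (k+1) * G n 0 k = G n 0 k * S n (k+1) :=
        (commute_SG (Or.inr (by omega))).eq
      have br : S n k * S n (k+1) * S n k = S n (k+1) * S n k * S n (k+1) :=
        rel2 (i := k) hk (by omega)
      rw [e0, e2]
      refine Eq.symm ?_
      calc (G n 2 (k-1) * S n (k+1))⁻¹ * (S n 0 * S n 1 * (S n 0)⁻¹) *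
              (G n 2 (k-1) * S n (k+1)) * (G n 0 k * S n k)
          = (S n (k+1))⁻¹ * ((G n 2 (k-1))⁻¹ * (S n 0 * S n 1 * (S n 0)⁻¹) * G n 2 (k-1)) *
              (S n (k+1) * G n 0 k) * S n k := by group
        _ = (S n (k+1))⁻¹ * ((G n 2 (k-1))⁻¹ * (S n 0 * S n 1 * (S n 0)⁻¹) * G n 2 (k-1)) *
              (G n 0 k * S n (k+1)) * S n k := by rw [cc]
        _ = (S n (k+1))⁻¹ *
              ((G n 2 (k-1))⁻¹ * (S n 0 * S n 1 * (S n 0)⁻¹) * G n 2 (k-1) * G n 0 k) *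
              (S n (k+1) * S n k) := by group
        _ = (S n (k+1))⁻¹ * (G n 0 k * S n k) * (S n (k+1) * S n k) := by rw [← IH]
        _ = (S n (k+1))⁻¹ * G n 0 k * (S n k * S n (k+1) * S n k) := by group
        _ = (S n (k+1))⁻¹ * G n 0 k * (S n (k+1) * S n k * S n (k+1)) := by rw [br]
        _ = (S n (k+1))⁻¹ * (S n (k+1) * G n 0 k) * (S n k * S n (k+1)) := by
              rw [cc]; group
        _ = G n 0 k * S n k * S n (k+1) := by group

/-- Step 1: `δ s_{n-1} = a_{n-1} δ`. -/
lemma step1 (h3 : 2 ≤ n) :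
    D n * S n (n-1) =
      (G n 2 (n-2))⁻¹ * (S n 0 * S n 1 * (S n 0)⁻¹) * G n 2 (n-2) * D n := by
  have e : D n = G n 0 (n-1) * S n (n-1) := by
    have h5 : D n = G n 0 ((n-1)+1) := by rw [show (n-1)+1 = n from by omega]
    rw [h5, G_succ]; simp
  have h4 : (n-1)-1 = n-2 := by omega
  have := ind_a (n := n) (n-1) (by omega) (by omega)
  rw [h4] at this
  calc D n * S n (n-1) = G n 0 (n-1) * S n (n-1) * S n (n-1) := by rw [e]
    _ = (G n 2 (n-2))⁻¹ * (S n 0 * S n 1 * (S n 0)⁻¹) * G n 2 (n-2) * G n 0 (n-1) *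
          S n (n-1) := by rw [this]
    _ = (G n 2 (n-2))⁻¹ * (S n 0 * S n 1 * (S n 0)⁻¹) * G n 2 (n-2) * D n := by
          rw [e]; group

/-- Step 2: `δ a_{n-1} = s_1 δ`. -/
lemma step2 (h3 : 2 ≤ n) :
    D n * ((G n 2 (n-2))⁻¹ * (S n 0 * S n 1 * (S n 0)⁻¹) * G n 2 (n-2)) =
      S n 1 * D n := by
  obtain ⟨m, rfl⟩ : ∃ m, n = 2 + m := ⟨n - 2, by omega⟩
  have hm : (2+m)-2 = m := by omega
  have e1 : D (2+m) = S _ 0 * S _ 1 * G _ 2 m := by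
    rw [D, G_append 0 2 m, G_succ 0 1, G_one]
  have c0 : S (2+m) 0 * G (2+m) 2 m = G (2+m) 2 m * S (2+m) 0 :=
    (commute_SG (Or.inl le_rfl)).eq
  have r1 : S (2+m) 0 * S (2+m) 1 * S (2+m) 0 * S (2+m) 1 =
      S (2+m) 1 * S (2+m) 0 * S (2+m) 1 * S (2+m) 0 := rel1 (by omega)
  rw [hm, e1]
  calc S (2+m) 0 * S (2+m) 1 * G (2+m) 2 m *
          ((G (2+m) 2 m)⁻¹ * (S (2+m) 0 * S (2+m) 1 * (S (2+m) 0)⁻¹) * G (2+m) 2 m)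
      = S (2+m) 0 * S (2+m) 1 * S (2+m) 0 * S (2+m) 1 *
          ((S (2+m) 0)⁻¹ * G (2+m) 2 m) := by group
    _ = S (2+m) 1 * S (2+m) 0 * S (2+m) 1 * S (2+m) 0 *
          ((S (2+m) 0)⁻¹ * G (2+m) 2 m) := by rw [r1]
    _ = S (2+m) 1 * (S (2+m) 0 * S (2+m) 1 * G (2+m) 2 m) := by group

lemma deltaG1 : ∀ k, k + 2 ≤ n → D n * G n 1 k = G n 2 k * D n := by
  intro k hk
  induction k with
  | zero => simp [G_zero]
  | succ k IH =>
      have IH := IH (by omega)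
      have sh : D n * S n (1+k) = S n (1+k+1) * D n := shift (by omega) (by omega)
      calc D n * G n 1 (k+1) = (D n * G n 1 k) * S n (1+k) := by rw [G_succ]; group
        _ = G n 2 k * (D n * S n (1+k)) := by rw [IH]; group
        _ = G n 2 k * (S n (1+k+1) * D n) := by rw [sh]
        _ = G n 2 (k+1) * D n := by
              rw [G_succ, show 2+k = 1+k+1 from by omega]; group

lemma chain0 : ∀ k, k + 1 ≤ n →
    D n ^ k * S n 0 = (G n 1 k)⁻¹ * S n 0 * G n 1 k * D n ^ k := by
  intro k hk
  induction k with
  | zero => simp [G_zero]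
  | succ k IH =>
      have IH := IH (by omega)
      have dg : D n * G n 1 k = G n 2 k * D n := deltaG1 k (by omega)
      have hd : D n * S n 0 = (S n 1)⁻¹ * S n 0 * S n 1 * D n := by
        have h := lemB (n := n) (by omega)
        calc D n * S n 0 = (S n 1)⁻¹ * (S n 1 * (D n * S n 0)) := by group
          _ = (S n 1)⁻¹ * (S n 0 * S n 1 * D n) := by rw [h]
          _ = (S n 1)⁻¹ * S n 0 * S n 1 * D n := by group
      have inv : D n * (G n 1 k)⁻¹ = (G n 2 k)⁻¹ * D n := by
        calc D n * (G n 1 k)⁻¹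
            = (G n 2 k)⁻¹ * (G n 2 k * D n) * (G n 1 k)⁻¹ := by group
          _ = (G n 2 k)⁻¹ * (D n * G n 1 k) * (G n 1 k)⁻¹ := by rw [dg]
          _ = (G n 2 k)⁻¹ * D n := by group
      have gc : G n 1 (k+1) = S n 1 * G n 2 k := by
        rw [G_cons]
      calc D n ^ (k+1) * S n 0
          = D n * (D n ^ k * S n 0) := by rw [pow_succ']; group
        _ = D n * ((G n 1 k)⁻¹ * S n 0 * G n 1 k * D n ^ k) := by rw [IH]
        _ = (D n * (G n 1 k)⁻¹) * (S n 0 * (G n 1 k * D n ^ k)) := by group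
        _ = ((G n 2 k)⁻¹ * D n) * (S n 0 * (G n 1 k * D n ^ k)) := by rw [inv]
        _ = (G n 2 k)⁻¹ * (D n * S n 0) * (G n 1 k * D n ^ k) := by group
        _ = (G n 2 k)⁻¹ * ((S n 1)⁻¹ * S n 0 * S n 1 * D n) * (G n 1 k * D n ^ k) := by
              rw [hd]
        _ = (G n 2 k)⁻¹ * (S n 1)⁻¹ * S n 0 * S n 1 * (D n * G n 1 k) * D n ^ k := by
              group
        _ = (G n 2 k)⁻¹ * (S n 1)⁻¹ * S n 0 * S n 1 * (G n 2 k * D n) * D n ^ k := by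
              rw [dg]
        _ = (S n 1 * G n 2 k)⁻¹ * S n 0 * (S n 1 * G n 2 k) * D n ^ (k+1) := by
              rw [pow_succ']; group
        _ = (G n 1 (k+1))⁻¹ * S n 0 * G n 1 (k+1) * D n ^ (k+1) := by rw [gc]

lemma central0 (h1 : 1 ≤ n) : D n ^ n * S n 0 = S n 0 * D n ^ n := by
  obtain ⟨m, rfl⟩ : ∃ m, n = m + 1 := ⟨n - 1, by omega⟩
  have ch := chain0 (n := m+1) m (by omega)
  have e' : G (m+1) 1 m = (S (m+1) 0)⁻¹ * D (m+1) := by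
    have : D (m+1) = S (m+1) 0 * G (m+1) 1 m := by rw [D, G_cons]
    rw [this]; group
  calc D (m+1) ^ (m+1) * S (m+1) 0
      = D (m+1) * (D (m+1) ^ m * S (m+1) 0) := by rw [pow_succ']; group
    _ = D (m+1) * ((G (m+1) 1 m)⁻¹ * S (m+1) 0 * G (m+1) 1 m * D (m+1) ^ m) := by
          rw [ch]
    _ = D (m+1) * (((S (m+1) 0)⁻¹ * D (m+1))⁻¹ * S (m+1) 0 *
          ((S (m+1) 0)⁻¹ * D (m+1)) * D (m+1) ^ m) := by rw [e']
    _ = S (m+1) 0 * (D (m+1) * D (m+1) ^ m) := by group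
    _ = S (m+1) 0 * D (m+1) ^ (m+1) := by rw [pow_succ']

lemma shift_pow : ∀ k i, 1 ≤ i → i + k + 1 ≤ n →
    D n ^ k * S n i = S n (i+k) * D n ^ k := by
  intro k
  induction k with
  | zero => intro i _ _; simp
  | succ k IH =>
      intro i h1 h2
      have IH := IH (i+1) (by omega) (by omega)
      have sh : D n * S n i = S n (i+1) * D n := shift h1 (by omega)
      calc D n ^ (k+1) * S n i = D n ^ k * (D n * S n i) := by rw [pow_succ]; group
        _ = D n ^ k * (S n (i+1) * D n) := by rw [sh]
        _ = (D n ^ k * S n (i+1)) * D n := by group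
        _ = S n (i+1+k) * D n ^ k * D n := by rw [IH]
        _ = S n (i+(k+1)) * D n ^ (k+1) := by
              rw [pow_succ, show i+(k+1) = i+1+k from by omega]; group

lemma central1 (h3 : 3 ≤ n) : D n ^ n * S n 1 = S n 1 * D n ^ n := by
  obtain ⟨m, rfl⟩ : ∃ m, n = 2 + m := ⟨n - 2, by omega⟩
  have A := step1 (n := 2+m) (by omega)
  have B := step2 (n := 2+m) (by omega)
  have hm : 2+m-1 = 1+m := by omega
  rw [hm] at A
  have sp : D (2+m) ^ m * S (2+m) 1 = S (2+m) (1+m) * D (2+m) ^ m :=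
    shift_pow m 1 (by omega) (by omega)
  have d2 : D (2+m) ^ 2 * S (2+m) (1+m) = S (2+m) 1 * D (2+m) ^ 2 := by
    calc D (2+m) ^ 2 * S (2+m) (1+m)
        = D (2+m) * (D (2+m) * S (2+m) (1+m)) := by rw [sq]; group
      _ = D (2+m) * ((G (2+m) 2 (2+m-2))⁻¹ * (S (2+m) 0 * S (2+m) 1 * (S (2+m) 0)⁻¹) *
            G (2+m) 2 (2+m-2) * D (2+m)) := by rw [A]
      _ = (D (2+m) * ((G (2+m) 2 (2+m-2))⁻¹ * (S (2+m) 0 * S (2+m) 1 * (S (2+m) 0)⁻¹) *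
            G (2+m) 2 (2+m-2))) * D (2+m) := by group
      _ = (S (2+m) 1 * D (2+m)) * D (2+m) := by rw [B]
      _ = S (2+m) 1 * D (2+m) ^ 2 := by rw [sq]; group
  calc D (2+m) ^ (2+m) * S (2+m) 1
      = D (2+m) ^ 2 * (D (2+m) ^ m * S (2+m) 1) := by rw [pow_add]; group
    _ = D (2+m) ^ 2 * (S (2+m) (1+m) * D (2+m) ^ m) := by rw [sp]
    _ = (D (2+m) ^ 2 * S (2+m) (1+m)) * D (2+m) ^ m := by group
    _ = S (2+m) 1 * D (2+m) ^ 2 * D (2+m) ^ m := by rw [d2]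
    _ = S (2+m) 1 * D (2+m) ^ (2+m) := by rw [pow_add]; group

lemma centralS (h3 : 3 ≤ n) (i : ℕ) : D n ^ n * S n i = S n i * D n ^ n := by
  by_cases hi : i < n
  · rcases Nat.eq_zero_or_pos i with rfl | hpos
    · exact central0 (by omega)
    · obtain ⟨j, rfl⟩ : ∃ j, i = 1 + j := ⟨i - 1, by omega⟩
      have sp : D n ^ j * S n 1 = S n (1+j) * D n ^ j :=
        shift_pow j 1 (by omega) (by omega)
      have c1 := central1 h3
      have hcomm : D n ^ n * D n ^ j = D n ^ j * D n ^ n := by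
        rw [← pow_add, ← pow_add, Nat.add_comm]
      have : D n ^ n * S n (1+j) * D n ^ j = S n (1+j) * D n ^ n * D n ^ j := by
        calc D n ^ n * S n (1+j) * D n ^ j
            = D n ^ n * (S n (1+j) * D n ^ j) := by group
          _ = D n ^ n * (D n ^ j * S n 1) := by rw [← sp]
          _ = (D n ^ n * D n ^ j) * S n 1 := by group
          _ = D n ^ j * (D n ^ n * S n 1) := by rw [hcomm]; group
          _ = D n ^ j * (S n 1 * D n ^ n) := by rw [c1]
          _ = (D n ^ j * S n 1) * D n ^ n := by group
          _ = S n (1+j) * D n ^ j * D n ^ n := by rw [sp]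
          _ = S n (1+j) * D n ^ n * D n ^ j := by rw [mul_assoc, ← hcomm]; group
      exact mul_right_cancel this
  · rw [S_eq' hi, mul_one, one_mul]

lemma twist_eq : artinBTwist n = D n ^ n := by
  have h : (List.ofFn fun i : Fin n => artinBGen i).prod = D n := by
    rw [D, G, ← List.range_eq_range', ← List.map_coe_finRange_eq_range, List.map_map,
      List.ofFn_eq_map]
    congr 1
    apply List.map_congr_left
    intro i _
    simp only [Function.comp_apply, S_eq i.isLt]
  rw [artinBTwist, h]

lemma twist_comm (h3 : 3 ≤ n) (g : ArtinB n) : Commute g (artinBTwist n) := by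
  have hz : ∀ i : Fin n, artinBGen i * artinBTwist n = artinBTwist n * artinBGen i := by
    intro i
    rw [twist_eq]
    have h := centralS (n := n) h3 i.val
    rw [S_eq i.isLt, Fin.eta] at h
    exact h.symm
  have hc : Subgroup.closure (Set.range (PresentedGroup.of : Fin n → ArtinB n)) ≤
      Subgroup.centralizer {artinBTwist n} := by
    rw [Subgroup.closure_le]
    rintro x ⟨i, rfl⟩
    rw [SetLike.mem_coe, Subgroup.mem_centralizer_iff]
    rintro y (rfl : y = artinBTwist n)
    exact (hz i).symm
  have hg : g ∈ Subgroup.centralizer {artinBTwist n} := by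
    apply hc
    rw [PresentedGroup.closure_range_of]
    trivial
  have := Subgroup.mem_centralizer_iff.1 hg (artinBTwist n) rfl
  exact this.symm

/-- exponent-counting map on generators. -/
def expF (n : ℕ) (u v : ℤ) : Fin n → Multiplicative ℤ :=
  fun i => Multiplicative.ofAdd (if (i : ℕ) = 0 then u else v)

lemma expF_rels (u v : ℤ) : ∀ r ∈ typeBRels n, FreeGroup.lift (expF n u v) r = 1 := by
  intro r hr
  rcases hr with ⟨i, j, hi, hj, rfl⟩ | ⟨i, j, hi, hj, rfl⟩ | ⟨i, j, hij, rfl⟩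
  · simp only [map_mul, map_pow, map_inv, FreeGroup.lift_apply_of]
    rw [mul_comm (expF n u v j) (expF n u v i)]
    group
  · have hij : expF n u v i = expF n u v j := by
      simp only [expF]
      rw [if_neg (by omega), if_neg (by omega)]
    simp only [map_mul, map_inv, FreeGroup.lift_apply_of, hij]
    group
  · simp only [map_mul, map_inv, FreeGroup.lift_apply_of]
    rw [mul_comm (expF n u v j) (expF n u v i)]
    group

/-- The homomorphism `C(B_n) → ℤ` sending `s_1 ↦ u` and `s_i ↦ v` for `i ≥ 2`. -/
def psi (n : ℕ) (u v : ℤ) : ArtinB n →* Multiplicative ℤ :=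
  PresentedGroup.toGroup (expF_rels u v)

lemma psi_gen (u v : ℤ) (i : Fin n) :
    psi n u v (artinBGen i) = Multiplicative.ofAdd (if (i : ℕ) = 0 then u else v) :=
  PresentedGroup.toGroup.of _

/-- The transvection endomorphism `g ↦ g ⬝ z^{ψ(g)}`. -/
def sigma (h3 : 3 ≤ n) (u v : ℤ) : ArtinB n →* ArtinB n where
  toFun g := g * artinBTwist n ^ (Multiplicative.toAdd (psi n u v g))
  map_one' := by simp
  map_mul' a b := by
    simp only [map_mul, toAdd_mul, zpow_add]
    have hc : Commute b (artinBTwist n ^ Multiplicative.toAdd (psi n u v a)) :=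
      ((twist_comm h3 b).zpow_right _)
    calc a * b * (artinBTwist n ^ Multiplicative.toAdd (psi n u v a) *
            artinBTwist n ^ Multiplicative.toAdd (psi n u v b))
        = a * (b * artinBTwist n ^ Multiplicative.toAdd (psi n u v a)) *
            artinBTwist n ^ Multiplicative.toAdd (psi n u v b) := by group
      _ = a * (artinBTwist n ^ Multiplicative.toAdd (psi n u v a) * b) *
            artinBTwist n ^ Multiplicative.toAdd (psi n u v b) := by rw [hc.eq]
      _ = a * artinBTwist n ^ Multiplicative.toAdd (psi n u v a) *
            (b * artinBTwist n ^ Multiplicative.toAdd (psi n u v b)) := by group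

lemma sigma_gen (h3 : 3 ≤ n) (u v : ℤ) (i : Fin n) :
    sigma h3 u v (artinBGen i) =
      artinBGen i * artinBTwist n ^ (if (i : ℕ) = 0 then u else v) := by
  show artinBGen i * artinBTwist n ^ (Multiplicative.toAdd (psi n u v (artinBGen i))) = _
  rw [psi_gen, toAdd_ofAdd]

lemma sigma_injective (h3 : 3 ≤ n) (u v : ℤ) : Function.Injective (sigma h3 u v) := by
  rw [injective_iff_map_eq_one]
  intro g hg
  change g * artinBTwist n ^ (Multiplicative.toAdd (psi n u v g)) = 1 at hg
  set c : ℤ := Multiplicative.toAdd (psi n u v g) with hcdef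
  have hgz : g = artinBTwist n ^ (-c) := by
    rw [zpow_neg]
    exact eq_inv_of_mul_eq_one_left hg
  set w : ℤ := Multiplicative.toAdd (psi n u v ((List.ofFn fun i : Fin n => artinBGen i).prod)) with hw
  have hpsiT : Multiplicative.toAdd (psi n u v (artinBTwist n)) = (n : ℤ) * w := by
    rw [artinBTwist, map_pow, toAdd_pow, ← hw, nsmul_eq_mul]
  have hc : c = -c * ((n : ℤ) * w) := by
    conv_lhs => rw [hcdef, hgz]
    rw [map_zpow, toAdd_zpow, hpsiT, smul_eq_mul]
  have hkey : c * (1 + (n : ℤ) * w) = 0 := by linear_combination hc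
  have hne : (1 : ℤ) + (n : ℤ) * w ≠ 0 := by
    intro h0
    have hdvd : (n : ℤ) ∣ 1 := ⟨-w, by linarith⟩
    have := Int.le_of_dvd one_pos hdvd
    have : (3 : ℤ) ≤ (n : ℤ) := by exact_mod_cast h3
    omega
  have hc0 : c = 0 := by
    rcases mul_eq_zero.1 hkey with h | h
    · exact h
    · exact absurd h hne
  rw [hgz, hc0]
  simp

end ArtinBAux

/-- For `n ≥ 3` and integers `u, v`, there is a unique endomorphism `ρ`
of the Artin group of type `B_n` with `ρ(s_1) = s_1 z^u` and `ρ(s_i) = s_i z^v` for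
`2 ≤ i ≤ n`, and it is injective for every choice of `u` and `v`. -/
theorem artinB_transvection_endomorphism
    (n : ℕ) (hn : 3 ≤ n) (u v : ℤ) :
    (∃! ρ : ArtinB n →* ArtinB n,
        ∀ i : Fin n,
          ρ (artinBGen i) = artinBGen i * artinBTwist n ^ (if (i : ℕ) = 0 then u else v)) ∧
    (∀ ρ : ArtinB n →* ArtinB n,
        (∀ i : Fin n,
          ρ (artinBGen i) = artinBGen i * artinBTwist n ^ (if (i : ℕ) = 0 then u else v)) →
        Function.Injective ρ) := by
  constructor
  · refine ⟨ArtinBAux.sigma hn u v, fun i => ArtinBAux.sigma_gen hn u v i, ?_⟩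
    intro ρ hρ
    refine PresentedGroup.ext fun i => ?_
    rw [show (PresentedGroup.of i : ArtinB n) = artinBGen i from rfl, hρ i,
      ArtinBAux.sigma_gen hn u v i]
  · intro ρ hρ
    have hρσ : ρ = ArtinBAux.sigma hn u v := by
      refine PresentedGroup.ext fun i => ?_
      rw [show (PresentedGroup.of i : ArtinB n) = artinBGen i from rfl, hρ i,
        ArtinBAux.sigma_gen hn u v i]
    rw [hρσ]
    exact ArtinBAux.sigma_injective hn u v
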